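/- Let A₁, A₂ ⊆ E be nonempty compact sets and let λ ≥ 0. Then for every z₀ ∈ E there exists a global Carathéodory solution (Z, ξ) of the inclusion Ż_τ ∈ −(1/4)·G_λ(Z_τ) with Z_0 = z₀. -/

import Mathlib

open MeasureTheory Metric Filter Topology
open Set intervalIntegral


lemma my_isCompact_convexHull {E : Type*} [NormedAddCommGroup E] [NormedSpace ℝ E]
    [FiniteDimensional ℝ E] {s : Set E} (hs : IsCompact s) :
    IsCompact (convexHull ℝ s) := by
  classical
  rcases s.eq_empty_or_nonempty with rfl | ⟨s₀, hs₀⟩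
  · simp
  set n := Module.finrank ℝ E + 1 with hn
  have hT : IsCompact ((stdSimplex ℝ (Fin n)) ×ˢ (Set.univ.pi fun _ : Fin n => s)) :=
    (isCompact_stdSimplex _ _).prod (isCompact_univ_pi fun _ => hs)
  have hcont : Continuous (fun p : (Fin n → ℝ) × (Fin n → E) => ∑ i, p.1 i • p.2 i) :=
    continuous_finset_sum _ fun i _ =>
      ((continuous_apply i).comp continuous_fst).smul ((continuous_apply i).comp continuous_snd)
  have himg : (fun p : (Fin n → ℝ) × (Fin n → E) => ∑ i, p.1 i • p.2 i) ''
      ((stdSimplex ℝ (Fin n)) ×ˢ (Set.univ.pi fun _ : Fin n => s)) = convexHull ℝ s := by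
    apply Subset.antisymm
    · rintro - ⟨⟨w, z⟩, ⟨⟨hw0, hw1⟩, hz⟩, rfl⟩
      simp only
      rw [← Finset.centerMass_eq_of_sum_1 _ z hw1]
      exact Finset.centerMass_mem_convexHull _ (fun i _ => hw0 i) (by rw [hw1]; norm_num)
        (fun i _ => hz i (Set.mem_univ i))
    · intro xx hx
      obtain ⟨ι, hι, z, w, hzs, hai, hwpos, hw1, hsum⟩ := eq_pos_convex_span_of_mem_convexHull hx
      have hcard : Fintype.card ι ≤ n := by
        have h1 := hai.card_le_finrank_succ
        have h2 : Module.finrank ℝ ↥(vectorSpan ℝ (Set.range z)) ≤ Module.finrank ℝ E :=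
          Submodule.finrank_le _
        omega
      obtain ⟨e⟩ : Nonempty (ι ↪ Fin n) := by
        rw [Function.Embedding.nonempty_iff_card_le, Fintype.card_fin]; exact hcard
      set w' : Fin n → ℝ := fun j => ∑ i, if e i = j then w i else 0 with hw'
      set z' : Fin n → E := fun j => if h : ∃ i, e i = j then z h.choose else s₀ with hz'
      have hz'e : ∀ i, z' (e i) = z i := by
        intro i
        have h : ∃ i', e i' = e i := ⟨i, rfl⟩
        have := h.choose_spec
        simp only [hz', dif_pos h]
        exact congrArg z (e.injective this)
      refine ⟨⟨w', z'⟩, ⟨⟨fun j => Finset.sum_nonneg fun i _ => by split <;> simp [(hwpos _).le], ?_⟩,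
        fun j _ => ?_⟩, ?_⟩
      · rw [hw', Finset.sum_comm]
        rw [← hw1]
        refine Finset.sum_congr rfl fun i _ => ?_
        rw [Finset.sum_ite_eq]
        simp
      · by_cases h : ∃ i, e i = j
        · simp only [hz', dif_pos h]
          exact hzs (Set.mem_range_self _)
        · simp only [hz', dif_neg h]
          exact hs₀
      · simp only
        have : ∀ j : Fin n, w' j • z' j = ∑ i, if e i = j then w i • z i else 0 := by
          intro j
          rw [hw', Finset.sum_smul]
          refine Finset.sum_congr rfl fun i _ => ?_
          by_cases h : e i = j
          · rw [if_pos h, if_pos h, ← h, hz'e]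
          · simp [h]
        rw [Finset.sum_congr rfl fun j _ => this j, Finset.sum_comm, ← hsum]
        refine Finset.sum_congr rfl fun i _ => ?_
        rw [Finset.sum_ite_eq]
        simp
  rw [← himg]
  exact hT.image hcont


/-- Norm of the derivative of an `M`-Lipschitz curve is at most `M`. -/
lemma my_deriv_norm_le {F : Type*} [NormedAddCommGroup F] [NormedSpace ℝ F]
    {M : ℝ} {Z : ℝ → F} (hZ : ∀ a b : ℝ, ‖Z b - Z a‖ ≤ M * |b - a|)
    {τ : ℝ} {v : F} (hv : HasDerivAt Z v τ) : ‖v‖ ≤ M := by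
  have hs := hasDerivAt_iff_tendsto_slope.mp hv
  refine le_of_tendsto (hs.norm) ?_
  filter_upwards [self_mem_nhdsWithin] with t ht
  have ht' : t - τ ≠ 0 := sub_ne_zero.mpr ht
  rw [slope_def_module, norm_smul, norm_inv, Real.norm_eq_abs]
  rw [inv_mul_le_iff₀ (abs_pos.mpr ht')]
  calc ‖Z t - Z τ‖ ≤ M * |t - τ| := hZ τ t
    _ = |t - τ| * M := mul_comm _ _
  
/-- Fundamental theorem of calculus for Lipschitz curves, via difference quotients and
dominated convergence. -/
lemma my_lipschitz_ftc {F : Type*} [NormedAddCommGroup F] [NormedSpace ℝ F] [CompleteSpace F]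
    {M : ℝ} {Z ξ : ℝ → F}
    (hZ : ∀ a b : ℝ, ‖Z b - Z a‖ ≤ M * |b - a|)
    (hder : ∀ᵐ s : ℝ, HasDerivAt Z (ξ s) s)
    (hmeas : AEStronglyMeasurable ξ MeasureTheory.volume)
    (a b : ℝ) : Z b - Z a = ∫ s in a..b, ξ s := by
  have hM : 0 ≤ M := by
    have := hZ 0 1
    simp at this
    nlinarith [norm_nonneg (Z 1 - Z 0)]
  have hZc : Continuous Z := by
    rw [Metric.continuous_iff]
    intro x ε hε
    rcases eq_or_lt_of_le hM with hM0 | hMpos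
    · exact ⟨1, one_pos, fun y _ => by
        rw [dist_eq_norm]
        calc ‖Z y - Z x‖ ≤ M * |y - x| := hZ x y
          _ = 0 * |y - x| := by rw [hM0]
          _ = 0 := by ring
          _ < ε := hε⟩
    · refine ⟨ε / M, by positivity, fun y hy => ?_⟩
      rw [dist_eq_norm]
      calc ‖Z y - Z x‖ ≤ M * |y - x| := hZ x y
        _ = M * dist y x := by rw [Real.dist_eq]
        _ < M * (ε / M) := by exact (mul_lt_mul_iff_right₀ hMpos).mpr hy
        _ = ε := by field_simp
  -- the difference quotients
  set h : ℕ → ℝ := fun k => ((k : ℝ) + 1)⁻¹ with hh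
  have hpos : ∀ k, 0 < h k := fun k => by positivity
  set g : ℕ → ℝ → F := fun k s => (h k)⁻¹ • (Z (s + h k) - Z s) with hg
  have hZint : ∀ u v : ℝ, IntervalIntegrable Z MeasureTheory.volume u v :=
    fun u v => hZc.intervalIntegrable u v
  -- ∫ g k = (h k)⁻¹ • (∫_b^{b+h} Z - ∫_a^{a+h} Z)
  have hgint : ∀ k, (∫ s in a..b, g k s)
      = (h k)⁻¹ • ((∫ s in b..(b + h k), Z s) - ∫ s in a..(a + h k), Z s) := by
    intro k
    have h1 : (∫ s in a..b, g k s) = (h k)⁻¹ • ((∫ s in a..b, Z (s + h k)) - ∫ s in a..b, Z s) := by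
      rw [hg]
      simp only
      have hZsh : IntervalIntegrable (fun s => Z (s + h k)) MeasureTheory.volume a b :=
        Continuous.intervalIntegrable (by continuity) _ _
      rw [← intervalIntegral.integral_sub hZsh (hZint a b), ← intervalIntegral.integral_smul]
    rw [h1, intervalIntegral.integral_comp_add_right]
    congr 1
    have e1 : (∫ s in (a + h k)..(b + h k), Z s)
        = (∫ s in (a + h k)..b, Z s) + ∫ s in b..(b + h k), Z s :=
      (integral_add_adjacent_intervals (hZint _ _) (hZint _ _)).symm
    have e2 : (∫ s in a..b, Z s)
        = (∫ s in a..(a + h k), Z s) + ∫ s in (a + h k)..b, Z s :=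
      (integral_add_adjacent_intervals (hZint _ _) (hZint _ _)).symm
    rw [e1, e2]
    abel
  -- endpoint limits
  have hend : ∀ c : ℝ, Filter.Tendsto (fun k => (h k)⁻¹ • ∫ s in c..(c + h k), Z s)
      Filter.atTop (𝓝 (Z c)) := by
    intro c
    rw [← tendsto_sub_nhds_zero_iff]
    apply squeeze_zero_norm (a := fun k => M * h k)
    · intro k
      have e0 : (h k)⁻¹ • (∫ s in c..(c + h k), Z s) - Z c
          = (h k)⁻¹ • ∫ s in c..(c + h k), (Z s - Z c) := by
        rw [intervalIntegral.integral_sub (hZint _ _) (intervalIntegrable_const)]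
        rw [smul_sub, intervalIntegral.integral_const]
        have : (c + h k - c) = h k := by ring
        rw [this, smul_smul, inv_mul_cancel₀ (hpos k).ne', one_smul]
      rw [e0, norm_smul, norm_inv, Real.norm_eq_abs, abs_of_pos (hpos k)]
      have hb : ‖∫ s in c..(c + h k), (Z s - Z c)‖ ≤ (M * h k) * |c + h k - c| := by
        apply intervalIntegral.norm_integral_le_of_norm_le_const
        intro x hx
        rw [Set.uIoc_of_le (by linarith [hpos k])] at hx
        calc ‖Z x - Z c‖ ≤ M * |x - c| := hZ c x
          _ ≤ M * h k := by
              apply mul_le_mul_of_nonneg_left _ hM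
              rw [abs_of_nonneg (by linarith [hx.1.le])]
              linarith [hx.2]
      rw [show c + h k - c = h k by ring, abs_of_pos (hpos k)] at hb
      calc (h k)⁻¹ * ‖∫ s in c..(c + h k), (Z s - Z c)‖ ≤ (h k)⁻¹ * (M * h k * h k) := by
            apply mul_le_mul_of_nonneg_left hb (by positivity)
        _ = M * h k := by field_simp
    · have : Filter.Tendsto h Filter.atTop (𝓝 0) := by
        apply tendsto_inv_atTop_zero.comp
        exact Filter.tendsto_atTop_add_const_right _ _ tendsto_natCast_atTop_atTop
      simpa using this.const_mul M
  -- limit 1 : ∫ g k → Z b - Z a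
  have hlim1 : Filter.Tendsto (fun k => ∫ s in a..b, g k s) Filter.atTop (𝓝 (Z b - Z a)) := by
    simp only [hgint]
    simpa only [smul_sub] using ((hend b).sub (hend a))
  -- limit 2 : ∫ g k → ∫ ξ  (dominated convergence)
  have hlim2 : Filter.Tendsto (fun k => ∫ s in a..b, g k s) Filter.atTop
      (𝓝 (∫ s in a..b, ξ s)) := by
    apply intervalIntegral.tendsto_integral_filter_of_dominated_convergence (fun _ => M)
    · refine Filter.Eventually.of_forall fun k => Continuous.aestronglyMeasurable ?_
      exact Continuous.const_smul (by continuity) _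
    · refine Filter.Eventually.of_forall fun k => Filter.Eventually.of_forall fun x _ => ?_
      rw [hg]
      simp only
      rw [norm_smul, norm_inv, Real.norm_eq_abs, abs_of_pos (hpos k)]
      rw [inv_mul_le_iff₀ (hpos k)]
      calc ‖Z (x + h k) - Z x‖ ≤ M * |x + h k - x| := hZ x (x + h k)
        _ = M * h k := by rw [show x + h k - x = h k by ring, abs_of_pos (hpos k)]
        _ = h k * M := mul_comm _ _
    · exact intervalIntegrable_const
    · filter_upwards [hder] with x hx _
      have hs := hasDerivAt_iff_tendsto_slope.mp hx
      have hcomp : Filter.Tendsto (fun k => x + h k) Filter.atTop (𝓝[≠] x) := by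
        apply tendsto_nhdsWithin_of_tendsto_nhds_of_eventually_within
        · have : Filter.Tendsto h Filter.atTop (𝓝 0) := by
            apply tendsto_inv_atTop_zero.comp
            exact Filter.tendsto_atTop_add_const_right _ _ tendsto_natCast_atTop_atTop
          simpa using (this.const_add x)
        · exact Filter.Eventually.of_forall fun k => by
            simp only [Set.mem_compl_iff, Set.mem_singleton_iff]
            intro hc
            nlinarith [hpos k, hc]
      have := hs.comp hcomp
      convert this using 2 with k
      rw [hg]
      simp only [Function.comp_apply, slope_def_module]
      rw [show x + h k - x = h k by ring]
  exact tendsto_nhds_unique hlim1 hlim2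


abbrev EucSp (d : ℕ) := EuclideanSpace ℝ (Fin d)


/-- The set `Π_A(x)` of nearest points of `x` in `A`. -/
def nearestPts {d : ℕ} (A : Set (EuclideanSpace ℝ (Fin d)))
    (x : EuclideanSpace ℝ (Fin d)) : Set (EuclideanSpace ℝ (Fin d)) :=
  {a ∈ A | ‖x - a‖ = Metric.infDist x A}

/-- The outer-Clarke field
`G_λ(z) = conv {2λ(z-a₁) + 2(1-λ)(z-a₂) : a₁ ∈ Π_{A₁}(z), a₂ ∈ Π_{A₂}(z)}`. -/
noncomputable def outerClarkeField {d : ℕ} (A₁ A₂ : Set (EuclideanSpace ℝ (Fin d))) (lam : ℝ)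
    (z : EuclideanSpace ℝ (Fin d)) : Set (EuclideanSpace ℝ (Fin d)) :=
  convexHull ℝ
    (Set.image2 (fun a₁ a₂ => (2 * lam) • (z - a₁) + (2 * (1 - lam)) • (z - a₂))
      (nearestPts A₁ z) (nearestPts A₂ z))

/-- `(Z, ξ)` is a global Carathéodory solution of `Ż_τ ∈ -(1/4)·G_λ(Z_τ)`:
`ξ` is locally integrable on `[0,∞)`, `ξ_τ ∈ -(1/4)·G_λ(Z_τ)` for a.e. `τ ≥ 0`,
and `Z_τ = Z_0 + ∫₀^τ ξ_s ds` for all `τ ≥ 0`. -/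
def IsCaratheodorySolution {d : ℕ} (A₁ A₂ : Set (EuclideanSpace ℝ (Fin d))) (lam : ℝ)
    (Z ξ : ℝ → EuclideanSpace ℝ (Fin d)) : Prop :=
  MeasureTheory.LocallyIntegrableOn ξ (Set.Ici 0) MeasureTheory.volume ∧
  (∀ᵐ τ ∂(MeasureTheory.volume.restrict (Set.Ici (0 : ℝ))),
    ξ τ ∈ (fun v => -(4 : ℝ)⁻¹ • v) '' outerClarkeField A₁ A₂ lam (Z τ)) ∧
  (∀ τ : ℝ, 0 ≤ τ → Z τ = Z 0 + ∫ s in (0 : ℝ)..τ, ξ s)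

set_option maxHeartbeats 1000000 in
theorem existence_of_caratheodory_solution
    (d : ℕ) (hd : 1 ≤ d)
    (A₁ A₂ : Set (EuclideanSpace ℝ (Fin d)))
    (hA₁ : A₁.Nonempty) (hA₂ : A₂.Nonempty)
    (hA₁cpt : IsCompact A₁) (hA₂cpt : IsCompact A₂)
    (lam : ℝ) (hlam : 0 ≤ lam)
    (z₀ : EuclideanSpace ℝ (Fin d)) :
    ∃ Z ξ : ℝ → EuclideanSpace ℝ (Fin d),
      IsCaratheodorySolution A₁ A₂ lam Z ξ ∧ Z 0 = z₀ := by
  classical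
  -- nearest point selections
  choose n₁ hn₁A hn₁d using fun z : EucSp d => hA₁cpt.exists_infDist_eq_dist hA₁ z
  choose n₂ hn₂A hn₂d using fun z : EucSp d => hA₂cpt.exists_infDist_eq_dist hA₂ z
  have hn₁mem : ∀ z : EucSp d, n₁ z ∈ nearestPts A₁ z := fun z =>
    ⟨hn₁A z, by rw [← dist_eq_norm]; exact (hn₁d z).symm⟩
  have hn₂mem : ∀ z : EucSp d, n₂ z ∈ nearestPts A₂ z := fun z =>
    ⟨hn₂A z, by rw [← dist_eq_norm]; exact (hn₂d z).symm⟩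
  -- pure vectors and the field
  set pv : EucSp d → EucSp d → EucSp d → EucSp d := fun w a₁ a₂ =>
    -(4 : ℝ)⁻¹ • ((2 * lam) • (w - a₁) + (2 * (1 - lam)) • (w - a₂)) with hpv
  set Fld : EucSp d → Set (EucSp d) := fun w =>
    (fun v => -(4 : ℝ)⁻¹ • v) '' outerClarkeField A₁ A₂ lam w with hFld
  have hpvmem : ∀ w a₁ a₂ : EucSp d, a₁ ∈ nearestPts A₁ w → a₂ ∈ nearestPts A₂ w →
      pv w a₁ a₂ ∈ Fld w := fun w a₁ a₂ h1 h2 =>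
    ⟨_, subset_convexHull ℝ _ (Set.mem_image2_of_mem h1 h2), rfl⟩
  set sel : EucSp d → EucSp d := fun z => pv z (n₁ z) (n₂ z) with hsel
  set cent : EucSp d → EucSp d := fun z => lam • n₁ z + (1 - lam) • n₂ z with hcent
  have hseleq : ∀ z : EucSp d, sel z = (2⁻¹ : ℝ) • (cent z - z) := fun z => by
    simp only [hsel, hpv, hcent]; module
  have hselmem : ∀ z : EucSp d, sel z ∈ Fld z := fun z => hpvmem z _ _ (hn₁mem z) (hn₂mem z)
  -- bounds
  set T : Set (EucSp d) := Set.image2 (fun a b => lam • a + (1 - lam) • b) A₁ A₂ with hT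
  have hTcp : IsCompact T := by
    rw [hT, ← Set.image_prod]
    exact (hA₁cpt.prod hA₂cpt).image
      ((continuous_fst.const_smul lam).add (continuous_snd.const_smul (1 - lam)))
  obtain ⟨D, hD⟩ := (isBounded_iff_subset_closedBall 0).mp hTcp.isBounded
  have hcentT : ∀ z : EucSp d, cent z ∈ T := fun z => Set.mem_image2_of_mem (hn₁A z) (hn₂A z)
  have hDnorm : ∀ y ∈ T, ‖y‖ ≤ D := fun y hy => by
    simpa [dist_eq_norm] using hD hy
  have hD0 : 0 ≤ D := le_trans (norm_nonneg _) (hDnorm _ (hcentT z₀))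
  set R : ℝ := max ‖z₀‖ D with hR
  have hR0 : 0 ≤ R := le_trans (norm_nonneg z₀) (le_max_left _ _)
  have hDR : D ≤ R := le_max_right _ _
  set M : ℝ := (R + D) / 2 with hM
  have hM0 : 0 ≤ M := by positivity
  have hselb : ∀ z : EucSp d, ‖z‖ ≤ R → ‖sel z‖ ≤ M := fun z hz => by
    rw [hseleq z, norm_smul]
    have h1 : ‖cent z - z‖ ≤ D + R :=
      (norm_sub_le _ _).trans (add_le_add (hDnorm _ (hcentT z)) hz)
    have : ‖(2⁻¹ : ℝ)‖ = 2⁻¹ := by norm_num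
    rw [this]
    rw [hM]
    nlinarith [norm_nonneg (cent z - z)]
  -- Euler scheme
  set hstep : ℕ → ℝ := fun n => ((n : ℝ) + 1)⁻¹ with hhstep
  have hstep_pos : ∀ n, 0 < hstep n := fun n => by positivity
  have hstep_le1 : ∀ n, hstep n ≤ 1 := fun n => by
    rw [hhstep]
    simp only
    rw [inv_le_one_iff₀]
    right; push_cast; linarith [Nat.cast_nonneg (α := ℝ) n]
  have hstep_to0 : Filter.Tendsto hstep Filter.atTop (𝓝 0) := by
    apply tendsto_inv_atTop_zero.comp
    exact Filter.tendsto_atTop_add_const_right _ _ tendsto_natCast_atTop_atTop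
  set x : ℕ → ℕ → EucSp d := fun n k =>
    Nat.rec z₀ (fun _ xk => xk + hstep n • sel xk) k with hx
  have hx0 : ∀ n, x n 0 = z₀ := fun n => rfl
  have hxs : ∀ n k, x n (k + 1) = x n k + hstep n • sel (x n k) := fun n k => rfl
  have hxcomb : ∀ n k, x n (k + 1)
      = (1 - hstep n / 2) • x n k + (hstep n / 2) • cent (x n k) := by
    intro n k
    rw [hxs, hseleq]
    module
  have hxball : ∀ n k, ‖x n k‖ ≤ R := by
    intro n k
    induction k with
    | zero => rw [hx0]; exact le_max_left _ _
    | succ k ih =>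
      rw [hxcomb]
      have h2 : ‖(1 - hstep n / 2) • x n k‖ ≤ (1 - hstep n / 2) * R := by
        rw [norm_smul, Real.norm_eq_abs, abs_of_nonneg (by linarith [hstep_le1 n])]
        exact mul_le_mul_of_nonneg_left ih (by linarith [hstep_le1 n])
      have h3 : ‖(hstep n / 2) • cent (x n k)‖ ≤ (hstep n / 2) * D := by
        rw [norm_smul, Real.norm_eq_abs, abs_of_nonneg (by linarith [(hstep_pos n).le])]
        exact mul_le_mul_of_nonneg_left (hDnorm _ (hcentT _)) (by linarith [(hstep_pos n).le])
      calc ‖(1 - hstep n / 2) • x n k + (hstep n / 2) • cent (x n k)‖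
          ≤ (1 - hstep n / 2) * R + (hstep n / 2) * D := (norm_add_le _ _).trans (add_le_add h2 h3)
        _ ≤ R := by nlinarith [hstep_pos n, hstep_le1 n, hDR]
  set ξe : ℕ → ℝ → EucSp d := fun n s => sel (x n (⌊s / hstep n⌋).toNat) with hξe
  have hξeb : ∀ n s, ‖ξe n s‖ ≤ M := fun n s => hselb _ (hxball _ _)
  have hξemeas : ∀ n, AEStronglyMeasurable (ξe n) volume := by
    intro n
    have m1 : Measurable (fun s : ℝ => ⌊s / hstep n⌋) :=
      Int.measurable_floor.comp (measurable_id.div_const _)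
    have m2 : Measurable (ξe n) := (measurable_from_top
      (f := fun j : ℤ => sel (x n j.toNat))).comp m1
    exact m2.stronglyMeasurable.aestronglyMeasurable
  have hξeint : ∀ n (a b : ℝ), IntervalIntegrable (ξe n) volume a b := by
    intro n a b
    rw [intervalIntegrable_iff]
    refine Measure.integrableOn_of_bounded (M := M) ?_ (hξemeas n) ?_
    · exact (measure_Ioc_lt_top).ne
    · exact ae_restrict_of_ae (Filter.Eventually.of_forall fun s => hξeb n s)
  set Zc : ℕ → ℝ → EucSp d := fun n τ => z₀ + ∫ s in (0 : ℝ)..τ, ξe n s with hZc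
  have hZsub : ∀ n (a b : ℝ), Zc n b - Zc n a = ∫ s in a..b, ξe n s := by
    intro n a b
    have := intervalIntegral.integral_add_adjacent_intervals
      (hξeint n 0 a) (hξeint n a b)
    rw [hZc]
    simp only
    rw [← this]
    abel
  have hZlipn : ∀ n (a b : ℝ), ‖Zc n b - Zc n a‖ ≤ M * |b - a| := by
    intro n a b
    rw [hZsub]
    exact intervalIntegral.norm_integral_le_of_norm_le_const fun s _ => hξeb n s
  have hZc0 : ∀ n, Zc n 0 = z₀ := fun n => by simp [hZc]
  -- floor identities
  have hfl : ∀ n (k : ℕ) (s : ℝ), (k : ℝ) * hstep n ≤ s → s < ((k : ℝ) + 1) * hstep n →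
      (⌊s / hstep n⌋).toNat = k := by
    intro n k s h1 h2
    have hp := hstep_pos n
    have hfloor : ⌊s / hstep n⌋ = (k : ℤ) := by
      rw [Int.floor_eq_iff]
      constructor
      · push_cast
        rw [le_div_iff₀ hp]
        exact h1
      · push_cast
        rw [div_lt_iff₀ hp]
        exact h2
    rw [hfloor]
    simp
  have hgrid : ∀ (n k : ℕ), Zc n ((k : ℝ) * hstep n) = x n k := by
    intro n k
    induction k with
    | zero => simpa [hx0] using hZc0 n
    | succ k ih =>
      have hstepint : (∫ s in ((k : ℝ) * hstep n)..(((k : ℝ) + 1) * hstep n), ξe n s)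
          = hstep n • sel (x n k) := by
        have hcong : ∀ᵐ s : ℝ, s ∈ Set.uIoc ((k : ℝ) * hstep n) (((k : ℝ) + 1) * hstep n) →
            ξe n s = sel (x n k) := by
          have hne : ∀ᵐ s : ℝ, s ≠ ((k : ℝ) + 1) * hstep n := by
            rw [MeasureTheory.ae_iff]
            have : {s : ℝ | ¬s ≠ ((k : ℝ) + 1) * hstep n} = {((k : ℝ) + 1) * hstep n} := by
              ext s; simp [not_not]
            rw [this]
            exact measure_singleton _
          filter_upwards [hne] with s hs hmem
          rw [Set.uIoc_of_le (by nlinarith [hstep_pos n, Nat.cast_nonneg (α := ℝ) k])] at hmem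
          rw [hξe]
          simp only
          rw [hfl n k s hmem.1.le (lt_of_le_of_ne hmem.2 hs)]
        rw [intervalIntegral.integral_congr_ae hcong, intervalIntegral.integral_const]
        congr 1
        ring
      have hsub : Zc n (((k : ℝ) + 1) * hstep n) - Zc n ((k : ℝ) * hstep n)
          = hstep n • sel (x n k) := by rw [hZsub, hstepint]
      have hfin : Zc n (((k : ℝ) + 1) * hstep n)
          = Zc n ((k : ℝ) * hstep n) + hstep n • sel (x n k) :=
        sub_eq_iff_eq_add'.mp hsub
      rw [show ((k + 1 : ℕ) : ℝ) = (k : ℝ) + 1 by push_cast; ring, hfin, ih, hxs]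
  -- ultrafilter limit
  set U : Ultrafilter ℕ := Ultrafilter.of Filter.atTop with hU
  have hUat : (U : Filter ℕ) ≤ Filter.atTop := Ultrafilter.of_le _
  have hZball : ∀ (τ : ℝ) n, Zc n τ ∈ closedBall (0 : EucSp d) (‖z₀‖ + M * |τ|) := by
    intro τ n
    rw [mem_closedBall, dist_eq_norm, sub_zero]
    have h1 : ‖Zc n τ - Zc n 0‖ ≤ M * |τ| := by simpa using hZlipn n 0 τ
    calc ‖Zc n τ‖ = ‖Zc n 0 + (Zc n τ - Zc n 0)‖ := by rw [add_sub_cancel]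
      _ ≤ ‖Zc n 0‖ + ‖Zc n τ - Zc n 0‖ := norm_add_le _ _
      _ ≤ ‖z₀‖ + M * |τ| := add_le_add (le_of_eq (by rw [hZc0])) h1
  have hZex : ∀ τ : ℝ, ∃ y, Filter.Tendsto (fun n => Zc n τ) (U : Filter ℕ) (𝓝 y) := by
    intro τ
    obtain ⟨y, -, hy⟩ := (isCompact_closedBall (0 : EucSp d) (‖z₀‖ + M * |τ|)).ultrafilter_le_nhds
      (U.map fun n => Zc n τ) (by
        rw [Ultrafilter.coe_map, Filter.le_principal_iff]
        exact Filter.mem_map.mpr (Filter.univ_mem' fun n => hZball τ n))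
    exact ⟨y, by rwa [Ultrafilter.coe_map] at hy⟩
  choose Zf hZf using hZex
  have hZflip : ∀ a b : ℝ, ‖Zf b - Zf a‖ ≤ M * |b - a| := fun a b =>
    le_of_tendsto ((hZf b).sub (hZf a)).norm
      (Filter.Eventually.of_forall fun n => hZlipn n a b)
  have hZf0 : Zf 0 = z₀ := tendsto_nhds_unique (hZf 0)
    (by simp only [hZc0]; exact tendsto_const_nhds)
  -- Rademacher
  have hlipW : LipschitzWith ⟨M, hM0⟩ Zf := LipschitzWith.of_dist_le_mul fun a b => by
    rw [dist_eq_norm]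
    have := hZflip b a
    rw [Real.dist_eq]; exact this
  have hdiff : ∀ᵐ τ : ℝ, DifferentiableAt ℝ Zf τ := hlipW.ae_differentiableAt
  set ξ : ℝ → EucSp d := fun τ => if h : ∃ v, HasDerivAt Zf v τ then h.choose else sel (Zf τ) with hξ
  have hξder : ∀ τ, (∃ v, HasDerivAt Zf v τ) → HasDerivAt Zf (ξ τ) τ := fun τ h => by
    simp only [hξ, dif_pos h]; exact h.choose_spec
  have hexae : ∀ᵐ τ : ℝ, ∃ v, HasDerivAt Zf v τ :=
    hdiff.mono fun τ h => ⟨deriv Zf τ, h.hasDerivAt⟩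
  have hderae : ∀ᵐ τ : ℝ, HasDerivAt Zf (ξ τ) τ := hexae.mono fun τ h => hξder τ h
  have hξeq : ξ =ᵐ[volume] deriv Zf := hderae.mono fun τ h => h.deriv.symm
  have hξmeas : AEStronglyMeasurable ξ volume :=
    ((measurable_deriv Zf).stronglyMeasurable.aestronglyMeasurable).congr hξeq.symm
  have hξbdae : ∀ᵐ τ : ℝ, ‖ξ τ‖ ≤ M := hderae.mono fun τ h => my_deriv_norm_le hZflip h
  -- the key inclusion
  have hnear1cp : ∀ w : EucSp d, IsCompact (nearestPts A₁ w) := fun w =>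
    hA₁cpt.inter_right (isClosed_eq (continuous_const.sub continuous_id).norm continuous_const)
  have hnear2cp : ∀ w : EucSp d, IsCompact (nearestPts A₂ w) := fun w =>
    hA₂cpt.inter_right (isClosed_eq (continuous_const.sub continuous_id).norm continuous_const)
  have hmem : ∀ τ : ℝ, 0 ≤ τ → (∃ v, HasDerivAt Zf v τ) → ξ τ ∈ Fld (Zf τ) := by
    intro τ hτ hex
    have hDτ : HasDerivAt Zf (ξ τ) τ := hξder τ hex
    by_contra hvK
    -- the set is compact, convex, closed
    have hKcp : IsCompact (Fld (Zf τ)) := by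
      have h2 : IsCompact (Set.image2
          (fun a₁ a₂ => (2 * lam) • (Zf τ - a₁) + (2 * (1 - lam)) • (Zf τ - a₂))
          (nearestPts A₁ (Zf τ)) (nearestPts A₂ (Zf τ))) := by
        rw [← Set.image_prod]
        exact ((hnear1cp _).prod (hnear2cp _)).image
          (by fun_prop)
      have h3 : IsCompact (outerClarkeField A₁ A₂ lam (Zf τ)) := my_isCompact_convexHull h2
      exact h3.image (continuous_const_smul _)
    have hKconv : Convex ℝ (Fld (Zf τ)) := by
      rw [hFld]
      simp only
      rw [Set.image_smul]
      exact (convex_convexHull ℝ _).smul _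
    obtain ⟨f, u, hfv, hfK⟩ := geometric_hahn_banach_point_closed hKconv hKcp.isClosed hvK
    set g : EucSp d →L[ℝ] ℝ := -f with hgdef
    set S₀ : ℝ := -u with hS₀
    have hgK : ∀ y ∈ Fld (Zf τ), g y < S₀ := fun y hy => by
      simp only [hgdef, hS₀, ContinuousLinearMap.neg_apply]
      exact neg_lt_neg (hfK y hy)
    have hgv : S₀ < g (ξ τ) := by
      simp only [hgdef, hS₀, ContinuousLinearMap.neg_apply]
      exact neg_lt_neg hfv
    set c : ℝ := (S₀ + g (ξ τ)) / 2 with hcdef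
    have hc1 : S₀ < c := by rw [hcdef]; linarith
    have hc2 : c < g (ξ τ) := by rw [hcdef]; linarith
    -- upper semicontinuity of the pure-point values
    have husc : ∃ r : ℝ, 0 < r ∧ ∀ w a₁ a₂ : EucSp d, dist w (Zf τ) ≤ r →
        a₁ ∈ nearestPts A₁ w → a₂ ∈ nearestPts A₂ w → g (pv w a₁ a₂) < c := by
      by_contra hcon
      push_neg at hcon
      have hsel2 : ∀ m : ℕ, ∃ w a₁ a₂ : EucSp d, dist w (Zf τ) ≤ ((m : ℝ) + 1)⁻¹ ∧
          a₁ ∈ nearestPts A₁ w ∧ a₂ ∈ nearestPts A₂ w ∧ c ≤ g (pv w a₁ a₂) := by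
        intro m
        obtain ⟨w, a₁, a₂, h1, h2, h3, h4⟩ := hcon (((m : ℝ) + 1)⁻¹) (by positivity)
        exact ⟨w, a₁, a₂, h1, h2, h3, h4⟩
      choose w a₁ a₂ hwd ha₁ ha₂ hge using hsel2
      obtain ⟨⟨α₁, α₂⟩, hαmem, φ, hφ, hφt⟩ := (hA₁cpt.prod hA₂cpt).tendsto_subseq
        (x := fun m => (a₁ m, a₂ m)) (fun m => Set.mk_mem_prod (ha₁ m).1 (ha₂ m).1)
      have hα1t : Filter.Tendsto (fun m => a₁ (φ m)) Filter.atTop (𝓝 α₁) :=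
        (continuous_fst.tendsto _).comp hφt
      have hα2t : Filter.Tendsto (fun m => a₂ (φ m)) Filter.atTop (𝓝 α₂) :=
        (continuous_snd.tendsto _).comp hφt
      have hwt : Filter.Tendsto (fun m => w (φ m)) Filter.atTop (𝓝 (Zf τ)) := by
        rw [tendsto_iff_dist_tendsto_zero]
        refine squeeze_zero (f := fun b : ℕ => dist (w (φ b)) (Zf τ))
          (g := fun m : ℕ => ((m : ℝ) + 1)⁻¹) (fun m => dist_nonneg) ?_ ?_
        · intro m
          refine (hwd (φ m)).trans ?_
          have : (m : ℝ) + 1 ≤ (φ m : ℝ) + 1 := by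
            have := hφ.le_apply (x := m)
            push_cast
            exact_mod_cast add_le_add_left (Nat.cast_le.mpr this) 1
          exact inv_anti₀ (by positivity) this
        · apply tendsto_inv_atTop_zero.comp
          exact Filter.tendsto_atTop_add_const_right _ _ tendsto_natCast_atTop_atTop
      have hα1mem : α₁ ∈ nearestPts A₁ (Zf τ) := by
        refine ⟨hαmem.1, ?_⟩
        have l1 : Filter.Tendsto (fun m => ‖w (φ m) - a₁ (φ m)‖) Filter.atTop
            (𝓝 ‖Zf τ - α₁‖) := (hwt.sub hα1t).norm
        have l2 : Filter.Tendsto (fun m => ‖w (φ m) - a₁ (φ m)‖) Filter.atTop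
            (𝓝 (Metric.infDist (Zf τ) A₁)) := by
          refine (((continuous_infDist_pt A₁).tendsto (Zf τ)).comp hwt).congr fun m => ?_
          exact ((ha₁ (φ m)).2).symm
        exact tendsto_nhds_unique l1 l2
      have hα2mem : α₂ ∈ nearestPts A₂ (Zf τ) := by
        refine ⟨hαmem.2, ?_⟩
        have l1 : Filter.Tendsto (fun m => ‖w (φ m) - a₂ (φ m)‖) Filter.atTop
            (𝓝 ‖Zf τ - α₂‖) := (hwt.sub hα2t).norm
        have l2 : Filter.Tendsto (fun m => ‖w (φ m) - a₂ (φ m)‖) Filter.atTop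
            (𝓝 (Metric.infDist (Zf τ) A₂)) := by
          refine (((continuous_infDist_pt A₂).tendsto (Zf τ)).comp hwt).congr fun m => ?_
          exact ((ha₂ (φ m)).2).symm
        exact tendsto_nhds_unique l1 l2
      have hcle : c ≤ g (pv (Zf τ) α₁ α₂) := by
        have hpt : Filter.Tendsto (fun m => g (pv (w (φ m)) (a₁ (φ m)) (a₂ (φ m))))
            Filter.atTop (𝓝 (g (pv (Zf τ) α₁ α₂))) := by
          apply (g.continuous.tendsto _).comp
          exact (((hwt.sub hα1t).const_smul _).add ((hwt.sub hα2t).const_smul _)).const_smul _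
        exact ge_of_tendsto hpt (Filter.Eventually.of_forall fun m => hge (φ m))
      have := hgK _ (hpvmem _ _ _ hα1mem hα2mem)
      linarith
    obtain ⟨r, hr, husc⟩ := husc
    have hε : (0 : ℝ) < r / 3 := by linarith
    have hbpos : (0 : ℝ) < (r / 3) / (M + 1) := by positivity
    -- for small positive h, the increment of g ∘ Zf is at most c * h
    have hkey : ∀ h : ℝ, 0 < h → h ≤ (r / 3) / (M + 1) → g (Zf (τ + h) - Zf τ) ≤ c * h := by
      intro h hhpos hhle
      have hev1 : ∀ᶠ n in (U : Filter ℕ), dist (Zc n τ) (Zf τ) ≤ r / 3 :=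
        (hZf τ).eventually (Filter.eventually_of_mem (closedBall_mem_nhds _ hε) fun y hy => hy)
      have hev2 : ∀ᶠ n in (U : Filter ℕ), hstep n < (r / 3) / (M + 1) :=
        (hstep_to0.eventually_lt_const hbpos).filter_mono hUat
      have hbd : ∀ n, dist (Zc n τ) (Zf τ) ≤ r / 3 → hstep n < (r / 3) / (M + 1) →
          g (Zc n (τ + h)) - g (Zc n τ) ≤ c * h := by
        intro n hn1 hn2
        have hptw : ∀ s ∈ Set.Icc τ (τ + h), g (ξe n s) ≤ c := by
          intro s hs
          set k : ℕ := (⌊s / hstep n⌋).toNat with hk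
          have hsn : (0 : ℝ) ≤ s := le_trans hτ hs.1
          have h0 : (0 : ℤ) ≤ ⌊s / hstep n⌋ :=
            Int.floor_nonneg.mpr (by positivity)
          have hcast : ((k : ℤ) : ℝ) = ((⌊s / hstep n⌋ : ℤ) : ℝ) := by
            rw [hk]; exact_mod_cast congrArg (fun z : ℤ => (z : ℝ)) (Int.toNat_of_nonneg h0)
          have hkfl1 : (k : ℝ) * hstep n ≤ s := by
            have := Int.floor_le (s / hstep n)
            have h1 : ((k : ℤ) : ℝ) ≤ s / hstep n := by rw [hcast]; exact this
            calc (k : ℝ) * hstep n = ((k : ℤ) : ℝ) * hstep n := by push_cast; ring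
              _ ≤ (s / hstep n) * hstep n := by
                  exact mul_le_mul_of_nonneg_right h1 (hstep_pos n).le
              _ = s := by rw [div_mul_cancel₀ s (hstep_pos n).ne']
          have hkfl2 : s < ((k : ℝ) + 1) * hstep n := by
            have := Int.lt_floor_add_one (s / hstep n)
            have h1 : s / hstep n < ((k : ℤ) : ℝ) + 1 := by rw [hcast]; exact this
            calc s = (s / hstep n) * hstep n := by rw [div_mul_cancel₀ s (hstep_pos n).ne']
              _ < (((k : ℤ) : ℝ) + 1) * hstep n := by
                  exact mul_lt_mul_of_pos_right h1 (hstep_pos n)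
              _ = ((k : ℝ) + 1) * hstep n := by push_cast; ring
          have hd1 : dist (x n k) (Zc n s) ≤ M * hstep n := by
            rw [← hgrid n k, dist_eq_norm]
            refine (hZlipn n s ((k : ℝ) * hstep n)).trans ?_
            apply mul_le_mul_of_nonneg_left _ hM0
            rw [abs_of_nonpos (by linarith), neg_sub]
            linarith
          have hd2 : dist (Zc n s) (Zc n τ) ≤ M * h := by
            rw [dist_eq_norm]
            refine (hZlipn n τ s).trans ?_
            apply mul_le_mul_of_nonneg_left _ hM0
            rw [abs_of_nonneg (by linarith [hs.1])]
            linarith [hs.2]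
          have hMfr : M * hstep n ≤ r / 3 := by
            have h1 : M * hstep n ≤ M * ((r / 3) / (M + 1)) :=
              mul_le_mul_of_nonneg_left hn2.le hM0
            have h2 : M * ((r / 3) / (M + 1)) ≤ r / 3 := by
              rw [div_eq_mul_inv]
              rw [← mul_assoc]
              rw [mul_comm M (r/3), mul_assoc]
              nth_rewrite 2 [← mul_one (r/3)]
              apply mul_le_mul_of_nonneg_left _ (by positivity)
              rw [mul_inv_le_iff₀ (by positivity)]
              linarith
            linarith
          have hMh : M * h ≤ r / 3 := by
            have h1 : M * h ≤ M * ((r / 3) / (M + 1)) :=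
              mul_le_mul_of_nonneg_left hhle hM0
            have h2 : M * ((r / 3) / (M + 1)) ≤ r / 3 := by
              rw [div_eq_mul_inv]
              rw [← mul_assoc]
              rw [mul_comm M (r/3), mul_assoc]
              nth_rewrite 2 [← mul_one (r/3)]
              apply mul_le_mul_of_nonneg_left _ (by positivity)
              rw [mul_inv_le_iff₀ (by positivity)]
              linarith
            linarith
          have hdist : dist (x n k) (Zf τ) ≤ r := by
            calc dist (x n k) (Zf τ)
                ≤ dist (x n k) (Zc n s) + dist (Zc n s) (Zc n τ) + dist (Zc n τ) (Zf τ) :=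
                  dist_triangle4 _ _ _ _
              _ ≤ M * hstep n + M * h + r / 3 := by
                  exact add_le_add (add_le_add hd1 hd2) hn1
              _ ≤ r / 3 + r / 3 + r / 3 := by linarith
              _ = r := by ring
          have hxe : ξe n s = pv (x n k) (n₁ (x n k)) (n₂ (x n k)) := by
            rw [hξe]
          exact (husc _ _ _ hdist (hn₁mem _) (hn₂mem _)).le.trans_eq' (by rw [hxe])
        have hgint : IntervalIntegrable (fun s => g (ξe n s)) volume τ (τ + h) := by
          rw [intervalIntegrable_iff]
          refine Measure.integrableOn_of_bounded (M := ‖g‖ * M) ?_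
            (g.continuous.comp_aestronglyMeasurable (hξemeas n)) ?_
          · exact (measure_Ioc_lt_top).ne
          · refine ae_restrict_of_ae (Filter.Eventually.of_forall fun s => ?_)
            exact (g.le_opNorm _).trans (mul_le_mul_of_nonneg_left (hξeb n s) (norm_nonneg g))
        have hint : g (Zc n (τ + h)) - g (Zc n τ) = ∫ s in τ..(τ + h), g (ξe n s) := by
          rw [← map_sub, hZsub n τ (τ + h)]
          exact (g.intervalIntegral_comp_comm (hξeint n τ (τ + h))).symm
        have hint2 : (∫ s in τ..(τ + h), g (ξe n s)) ≤ ∫ _ in τ..(τ + h), c := by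
          exact intervalIntegral.integral_mono_on (by linarith) hgint
            intervalIntegrable_const hptw
        have hint3 : (∫ _ in τ..(τ + h), (c : ℝ)) = c * h := by
          rw [intervalIntegral.integral_const, smul_eq_mul]
          ring_nf
        rw [hint]
        calc (∫ s in τ..(τ + h), g (ξe n s)) ≤ ∫ _ in τ..(τ + h), c := hint2
          _ = c * h := hint3
      have hlim : Filter.Tendsto (fun n => g (Zc n (τ + h)) - g (Zc n τ)) (U : Filter ℕ)
          (𝓝 (g (Zf (τ + h)) - g (Zf τ))) :=
        ((g.continuous.tendsto _).comp (hZf (τ + h))).sub ((g.continuous.tendsto _).comp (hZf τ))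
      have hle := le_of_tendsto hlim (by
        filter_upwards [hev1, hev2] with n h1 h2
        exact hbd n h1 h2)
      rw [map_sub]
      exact hle
    -- slope limit from the right
    have hslope : Filter.Tendsto (fun h : ℝ => g (h⁻¹ • (Zf (τ + h) - Zf τ)))
        (𝓝[>] (0 : ℝ)) (𝓝 (g (ξ τ))) := by
      have hs := hasDerivAt_iff_tendsto_slope.mp hDτ
      have hmap : Filter.Tendsto (fun h : ℝ => τ + h) (𝓝[>] (0 : ℝ)) (𝓝[≠] τ) := by
        apply tendsto_nhdsWithin_of_tendsto_nhds_of_eventually_within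
        · have : Filter.Tendsto (fun h : ℝ => τ + h) (𝓝 (0 : ℝ)) (𝓝 τ) := by
            simpa using Continuous.tendsto (f := fun h : ℝ => τ + h) (continuous_const.add continuous_id) (0 : ℝ)
          exact this.mono_left nhdsWithin_le_nhds
        · filter_upwards [self_mem_nhdsWithin] with h hh
          simp only [Set.mem_Ioi] at hh
          simp only [Set.mem_compl_iff, Set.mem_singleton_iff]
          intro hcontra
          nlinarith
      refine ((g.continuous.tendsto _).comp (hs.comp hmap)).congr fun h => ?_
      simp only [Function.comp_apply, slope_def_module, add_sub_cancel_left]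
    have hfinal : g (ξ τ) ≤ c := by
      apply le_of_tendsto hslope
      filter_upwards [Ioo_mem_nhdsGT_of_mem (Set.left_mem_Ico.mpr hbpos)] with h hh
      have hkh := hkey h hh.1 hh.2.le
      rw [g.map_smul, smul_eq_mul]
      calc h⁻¹ * g (Zf (τ + h) - Zf τ) ≤ h⁻¹ * (c * h) :=
            mul_le_mul_of_nonneg_left hkh (inv_nonneg.mpr hh.1.le)
        _ = c := by
            rw [mul_comm c h, ← mul_assoc, inv_mul_cancel₀ (ne_of_gt hh.1), one_mul]
    linarith
  refine ⟨Zf, ξ, ⟨?_, ?_, ?_⟩, hZf0⟩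
  · have hloc : LocallyIntegrable ξ volume := locallyIntegrable_iff.mpr fun k hk =>
      Measure.integrableOn_of_bounded hk.measure_lt_top.ne hξmeas (ae_restrict_of_ae hξbdae)
    exact hloc.locallyIntegrableOn _
  · rw [ae_restrict_iff' measurableSet_Ici]
    filter_upwards [hexae] with τ hex hτ
    exact hmem τ hτ hex
  · intro τ hτ
    have := my_lipschitz_ftc hZflip hderae hξmeas 0 τ
    rw [sub_eq_iff_eq_add'] at this
    exact this
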